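/- Under Assumption (a), for every r ∈ Σ_m the concave function p ↦ Ξ_μ(p) − Σ_{z∈Z_m} p_z r_z attains its supremum: there exists p_0 ∈ ℝ^{Z_m} with Ξ_μ(p_0) − Σ_z p_{0,z} r_z ≥ Ξ_μ(p) − Σ_z p_z r_z for all p ∈ ℝ^{Z_m}. -/

import Mathlib

open MeasureTheory

section aux
variable {ι : Type*} [Fintype ι] [Nonempty ι]

private lemma ciInf_le_fin (f : ι → ℝ) (z : ι) : (⨅ i, f i) ≤ f z :=
  ciInf_le (Set.finite_range f).bddBelow z

private lemma exists_eq_iInf_fin (f : ι → ℝ) : ∃ i, (⨅ j, f j) = f i := by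
  obtain ⟨i, -, h⟩ := Finset.exists_mem_eq_inf' Finset.univ_nonempty f
  exact ⟨i, by rw [← Finset.inf'_univ_eq_ciInf]; exact h⟩

private lemma iInf_le_iInf_add {f g : ι → ℝ} {d : ℝ} (h : ∀ z, f z ≤ g z + d) :
    (⨅ z, f z) ≤ (⨅ z, g z) + d := by
  obtain ⟨z, hz⟩ := exists_eq_iInf_fin g
  calc (⨅ z, f z) ≤ f z := ciInf_le_fin f z
    _ ≤ g z + d := h z
    _ = (⨅ z, g z) + d := by rw [hz]

end aux

/-- Under Assumption (a), for every `r ∈ Σ_m` the concave function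
`p ↦ Ξ_μ(p) − Σ_z p_z r_z` attains its supremum at some `p₀ ∈ ℝ^{Z_m}`. -/
theorem stmt_7
    {X : Type*} [TopologicalSpace X] [PolishSpace X] [MeasurableSpace X] [BorelSpace X]
    {ι : Type*} [Fintype ι] [Nonempty ι]
    (μ : Measure X) [IsProbabilityMeasure μ]
    (c1 : X → ι → ℝ)
    (hc1 : ∀ z, Continuous fun x => c1 x z) (hb1 : ∀ z, ∃ M, ∀ x, |c1 x z| ≤ M)
    (hatomless : ∀ x : X, μ {x} = 0)
    (hlevel : ∀ (t : ℝ) (z z' : ι), z ≠ z' → μ {x | c1 x z - c1 x z' = t} = 0)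
    (r : ι → ℝ) (hr : ∀ z, 0 ≤ r z) (hr1 : ∑ z, r z = 1) :
    ∃ p0 : ι → ℝ, ∀ p : ι → ℝ,
      (∫ x, (⨅ z, c1 x z + p z) ∂μ) - ∑ z, p z * r z
        ≤ (∫ x, (⨅ z, c1 x z + p0 z) ∂μ) - ∑ z, p0 z * r z := by
  classical
  inhabit ι
  choose M hM using hb1
  obtain ⟨B, hB0, hB⟩ : ∃ B : ℝ, 0 ≤ B ∧ ∀ x z, |c1 x z| ≤ B := by
    refine ⟨max (Finset.univ.sup' Finset.univ_nonempty M) 0, le_max_right _ _, fun x z => ?_⟩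
    exact (hM z x).trans ((Finset.le_sup' M (Finset.mem_univ z)).trans (le_max_left _ _))
  set ξ : (ι → ℝ) → X → ℝ := fun p x => ⨅ z, c1 x z + p z with hξ
  -- continuity in x
  have hcont : ∀ p, Continuous (ξ p) := by
    intro p
    have h : Continuous fun x => Finset.univ.inf' Finset.univ_nonempty
        (fun z => c1 x z + p z) :=
      Continuous.finset_inf'_apply _ (fun z _ => (hc1 z).add continuous_const)
    simpa only [hξ, Finset.inf'_univ_eq_ciInf] using h
  -- integrability
  have hint : ∀ p, Integrable (ξ p) μ := by
    intro p
    set Np : ℝ := Finset.univ.sup' Finset.univ_nonempty fun z => |p z| with hNp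
    have hNple : ∀ z, |p z| ≤ Np :=
      fun z => Finset.le_sup' (fun z => |p z|) (Finset.mem_univ z)
    refine (integrable_const (B + Np)).mono' ((hcont p).aestronglyMeasurable)
      (Filter.Eventually.of_forall fun x => ?_)
    rw [Real.norm_eq_abs, abs_le]
    constructor
    · refine le_ciInf fun z => ?_
      have h1 := abs_le.mp (hB x z)
      have h3 := neg_abs_le (p z)
      have h4 := hNple z
      linarith
    · have h0 : ξ p x ≤ c1 x default + p default := ciInf_le_fin _ default
      have h1 := abs_le.mp (hB x default)
      have h2 := le_abs_self (p default)
      have h3 := hNple default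
      linarith
  -- Lipschitz bound for the integral functional
  have hΞlip : ∀ p q : ι → ℝ, (∫ x, ξ p x ∂μ) ≤ (∫ x, ξ q x ∂μ) + dist p q := by
    intro p q
    have hpt : ∀ x, ξ p x ≤ ξ q x + dist p q := by
      intro x
      refine iInf_le_iInf_add fun z => ?_
      have h1 : dist (p z) (q z) ≤ dist p q := dist_le_pi_dist p q z
      rw [Real.dist_eq] at h1
      have h2 := le_abs_self (p z - q z)
      show c1 x z + p z ≤ c1 x z + q z + dist p q
      linarith
    calc (∫ x, ξ p x ∂μ) ≤ ∫ x, (ξ q x + dist p q) ∂μ :=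
          integral_mono (hint p) ((hint q).add (integrable_const _)) hpt
      _ = (∫ x, ξ q x ∂μ) + dist p q := by
          rw [integral_add (hint q) (integrable_const _), integral_const, probReal_univ]
          simp
  have hΞcont : Continuous fun p : ι → ℝ => ∫ x, ξ p x ∂μ := by
    have hlip : LipschitzWith 1 fun p : ι → ℝ => ∫ x, ξ p x ∂μ := by
      refine LipschitzWith.of_dist_le_mul fun p q => ?_
      rw [NNReal.coe_one, one_mul, Real.dist_eq, abs_sub_le_iff]
      have h1 := hΞlip p q
      have h2 := hΞlip q p
      rw [dist_comm q p] at h2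
      constructor <;> linarith
    exact hlip.continuous
  set F : (ι → ℝ) → ℝ := fun p => (∫ x, ξ p x ∂μ) - ∑ z, p z * r z with hF
  have hFcont : Continuous F :=
    hΞcont.sub (continuous_finset_sum _ fun z _ => (continuous_apply z).mul continuous_const)
  have hK0 : (0 : ι → ℝ) ∈ Set.Icc (0 : ι → ℝ) (fun _ => 2 * B) := by
    refine ⟨le_refl _, fun z => ?_⟩
    simpa using by linarith
  obtain ⟨p0, hp0K, hp0⟩ := (isCompact_Icc (a := (0 : ι → ℝ)) (b := fun _ => 2 * B)).exists_isMaxOn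
    ⟨0, hK0⟩ hFcont.continuousOn
  refine ⟨p0, fun p => ?_⟩
  show F p ≤ F p0
  set t := Finset.univ.inf' Finset.univ_nonempty p with ht
  obtain ⟨z0, -, hz0⟩ := Finset.exists_mem_eq_inf' (Finset.univ_nonempty) p
  have htle : ∀ z, t ≤ p z := fun z => Finset.inf'_le p (Finset.mem_univ z)
  have hz0' : p z0 - t = 0 := by rw [ht, hz0]; ring
  set q : ι → ℝ := fun z => min (p z - t) (2 * B) with hq
  have hqle : ∀ z, q z ≤ p z - t := fun z => min_le_left _ _
  have hqK : q ∈ Set.Icc (0 : ι → ℝ) (fun _ => 2 * B) := by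
    refine ⟨fun z => le_min (by have := htle z; simp only [Pi.zero_apply]; linarith)
      (by simpa using by linarith), fun z => min_le_right _ _⟩
  -- shift identity
  have hshift : ∀ x, ξ (fun z => p z - t) x = ξ p x - t := by
    intro x
    apply le_antisymm
    · rw [le_sub_iff_add_le]
      refine le_ciInf fun z => ?_
      have h : (⨅ z, c1 x z + (p z - t)) ≤ c1 x z + (p z - t) :=
        ciInf_le_fin (fun z => c1 x z + (p z - t)) z
      show (⨅ z, c1 x z + (p z - t)) + t ≤ c1 x z + p z
      linarith
    · refine le_ciInf fun z => ?_
      have h : (⨅ z, c1 x z + p z) ≤ c1 x z + p z :=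
        ciInf_le_fin (fun z => c1 x z + p z) z
      show (⨅ z, c1 x z + p z) - t ≤ c1 x z + (p z - t)
      linarith
  -- truncation identity
  have heq : ∀ x, ξ (fun z => p z - t) x = ξ q x := by
    intro x
    apply le_antisymm
    · refine le_ciInf fun z => ?_
      rcases le_or_gt (p z - t) (2 * B) with h | h
      · have hqz : q z = p z - t := min_eq_left h
        have h2 : (⨅ z, c1 x z + (p z - t)) ≤ c1 x z + (p z - t) :=
          ciInf_le_fin (fun z => c1 x z + (p z - t)) z
        show (⨅ z, c1 x z + (p z - t)) ≤ c1 x z + q z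
        rw [hqz]; exact h2
      · have hqz : q z = 2 * B := min_eq_right h.le
        have h1 : (⨅ z, c1 x z + (p z - t)) ≤ c1 x z0 + (p z0 - t) :=
          ciInf_le_fin (fun z => c1 x z + (p z - t)) z0
        have hb0 := abs_le.mp (hB x z0)
        have hbz := abs_le.mp (hB x z)
        show (⨅ z, c1 x z + (p z - t)) ≤ c1 x z + q z
        rw [hqz]
        linarith
    · refine le_ciInf fun z => ?_
      have h2 : (⨅ z, c1 x z + q z) ≤ c1 x z + q z :=
        ciInf_le_fin (fun z => c1 x z + q z) z
      have h3 := hqle z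
      show (⨅ z, c1 x z + q z) ≤ c1 x z + (p z - t)
      linarith
  have hIq : (∫ x, ξ q x ∂μ) = (∫ x, ξ p x ∂μ) - t := by
    have hpt : ∀ x, ξ q x = ξ p x - t := fun x => (heq x).symm.trans (hshift x)
    rw [integral_congr_ae (Filter.Eventually.of_forall hpt),
      integral_sub (hint p) (integrable_const t), integral_const, probReal_univ]
    simp
  have hsum : ∑ z, q z * r z ≤ (∑ z, p z * r z) - t := by
    have h1 : ∑ z, q z * r z ≤ ∑ z, (p z - t) * r z :=
      Finset.sum_le_sum fun z _ => mul_le_mul_of_nonneg_right (hqle z) (hr z)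
    have h2 : ∑ z, (p z - t) * r z = (∑ z, p z * r z) - t := by
      simp_rw [sub_mul, Finset.sum_sub_distrib, ← Finset.mul_sum, hr1, mul_one]
    linarith
  have hFq : F p ≤ F q := by
    show (∫ x, ξ p x ∂μ) - ∑ z, p z * r z ≤ (∫ x, ξ q x ∂μ) - ∑ z, q z * r z
    rw [hIq]
    linarith
  exact hFq.trans (isMaxOn_iff.mp hp0 q hqK)
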